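/- If f is a homeomorphism of a compact metric space X such that every point in the connected component of some p ∈ X other than {p} exists (i.e., the component of p has more than one point) and f is the identity map, then p is not shadowable. -/
import Mathlib


open Metric Set

/-- Natural iterates of a homeomorphism. -/
def hnpow {X : Type*} [TopologicalSpace X] (f : X ≃ₜ X) : ℕ → X ≃ₜ X
  | 0 => Homeomorph.refl X
  | n+1 => (hnpow f n).trans f

/-- Integer iterates `fⁿ`, `n ∈ ℤ`, of a homeomorphism. -/
def hpow {X : Type*} [TopologicalSpace X] (f : X ≃ₜ X) : ℤ → X ≃ₜ X
  | Int.ofNat n => hnpow f n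
  | Int.negSucc n => hnpow f.symm (n+1)

variable {X : Type*} [MetricSpace X]

/-- `ξ` is a `δ`-pseudo-orbit of `f`. -/
def IsPseudoOrbit (f : X ≃ₜ X) (δ : ℝ) (ξ : ℤ → X) : Prop :=
  ∀ n : ℤ, dist (f (ξ n)) (ξ (n+1)) ≤ δ

/-- `ξ` is `ε`-shadowed by the orbit of `y`. -/
def ShadowedBy (f : X ≃ₜ X) (ε : ℝ) (y : X) (ξ : ℤ → X) : Prop :=
  ∀ n : ℤ, dist (hpow f n y) (ξ n) ≤ ε

/-- `x` is a shadowable point of `f`. -/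
def ShadowablePoint (f : X ≃ₜ X) (x : X) : Prop :=
  ∀ ε > 0, ∃ δ > 0, ∀ ξ : ℤ → X, IsPseudoOrbit f δ ξ → ξ 0 = x →
    ∃ y, ShadowedBy f ε y ξ

/-- `f` has the pseudo-orbit tracing property. -/
def POTP (f : X ≃ₜ X) : Prop :=
  ∀ ε > 0, ∃ δ > 0, ∀ ξ : ℤ → X, IsPseudoOrbit f δ ξ → ∃ y, ShadowedBy f ε y ξ

/-- `x` is a nonwandering point of `f`. -/
def NonWandering (f : X ≃ₜ X) (x : X) : Prop :=
  ∀ U ∈ nhds x, ∃ k : ℕ, 0 < k ∧ ((hpow f (k : ℤ)) '' U ∩ U).Nonempty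

/-- `x` is a chain recurrent point of `f`. -/
def ChainRecurrent (f : X ≃ₜ X) (x : X) : Prop :=
  ∀ ρ > 0, ∃ n : ℕ, 0 < n ∧ ∃ c : ℕ → X, c 0 = x ∧ c n = x ∧
    ∀ i < n, dist (f (c i)) (c (i+1)) ≤ ρ

/-- `f` is distal: `inf_{n∈ℤ} d(fⁿ x, fⁿ y) > 0` for all distinct `x, y`. -/
def Distal (f : X ≃ₜ X) : Prop :=
  ∀ x y : X, x ≠ y → ∃ c > 0, ∀ n : ℤ, c ≤ dist (hpow f n x) (hpow f n y)

/-- `f` is minimal: every full orbit is dense. -/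
def MinimalHomeo (f : X ≃ₜ X) : Prop :=
  ∀ x : X, Dense (Set.range fun n : ℤ => hpow f n x)

/-- `f` is equicontinuous (uniformly, over all integer iterates). -/
def EquicontinuousHomeo (f : X ≃ₜ X) : Prop :=
  ∀ α > 0, ∃ β > 0, ∀ x y : X, dist x y ≤ β → ∀ n : ℤ, dist (hpow f n x) (hpow f n y) ≤ α


lemma hpow_refl (Y : Type*) [TopologicalSpace Y] (n : ℤ) (x : Y) :
    hpow (Homeomorph.refl Y) n x = x := by
  have hn : ∀ m : ℕ, ∀ x : Y, hnpow (Homeomorph.refl Y) m x = x := by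
    intro m
    induction m with
    | zero => intro x; rfl
    | succ k ih => intro x; simp [hnpow, ih]
  cases n with
  | ofNat m => exact hn m x
  | negSucc m =>
    show hnpow (Homeomorph.refl Y).symm (m+1) x = x
    have : (Homeomorph.refl Y).symm = Homeomorph.refl Y := rfl
    rw [this]; exact hn (m+1) x

lemma chain_extend {p x y : X} {δ : ℝ} (hxy : dist x y ≤ δ)
    (h : ∃ n, ∃ c : ℕ → X, c 0 = p ∧ c n = x ∧ ∀ i < n, dist (c i) (c (i+1)) ≤ δ) :
    ∃ n, ∃ c : ℕ → X, c 0 = p ∧ c n = y ∧ ∀ i < n, dist (c i) (c (i+1)) ≤ δ := by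
  obtain ⟨n, c, h0, hn, hs⟩ := h
  refine ⟨n+1, fun i => if i ≤ n then c i else y, ?_, ?_, ?_⟩
  · simp [h0]
  · simp
  · intro i hi
    rcases lt_or_eq_of_le (Nat.lt_succ_iff.mp hi) with h' | h'
    · simpa [Nat.le_of_lt h', Nat.succ_le_of_lt h'] using hs i h'
    · subst h'
      simp [hn, hxy]

lemma chain_of_component {p q : X} (hq : q ∈ connectedComponent p) {δ : ℝ} (hδ : 0 < δ) :
    ∃ n, ∃ c : ℕ → X, c 0 = p ∧ c n = q ∧ ∀ i < n, dist (c i) (c (i+1)) ≤ δ := by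
  set S := {x : X | ∃ n, ∃ c : ℕ → X, c 0 = p ∧ c n = x ∧ ∀ i < n, dist (c i) (c (i+1)) ≤ δ}
    with hSdef
  have hopen : IsOpen S := by
    rw [Metric.isOpen_iff]
    intro x hx
    exact ⟨δ, hδ, fun y hy =>
      chain_extend (le_of_lt (by rw [dist_comm]; exact mem_ball.mp hy)) hx⟩
  have hclosed : IsClosed S := by
    rw [← isOpen_compl_iff, Metric.isOpen_iff]
    intro x hx
    refine ⟨δ, hδ, fun y hy hyS => hx ?_⟩
    exact chain_extend (le_of_lt (mem_ball.mp hy)) hyS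
  have hpS : p ∈ S := ⟨0, fun _ => p, rfl, rfl, fun i hi => absurd hi (Nat.not_lt_zero i)⟩
  exact (IsClopen.connectedComponent_subset ⟨hclosed, hopen⟩ hpS) hq

theorem stmt19 [CompactSpace X] (p : X)
    (h : ∃ q ∈ connectedComponent p, q ≠ p) :
    ¬ ShadowablePoint (Homeomorph.refl X) p := by
  obtain ⟨q, hq, hqp⟩ := h
  intro hS
  have hd : 0 < dist q p := dist_pos.mpr hqp
  obtain ⟨δ, hδ, hsh⟩ := hS (dist q p / 3) (by linarith)
  obtain ⟨n, c, h0, hn, hs⟩ := chain_of_component hq hδ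
  have hn0 : 1 ≤ n := by
    rcases Nat.eq_zero_or_pos n with h' | h'
    · exfalso; apply hqp; rw [← hn, h', h0]
    · exact h'
  set ξ : ℤ → X := fun m => if m < 0 then p else if (n:ℤ) ≤ m then q else c m.toNat
    with hξdef
  have hξ0 : ξ 0 = p := by
    have h1 : ¬ ((0:ℤ) < 0) := by omega
    have h2 : ¬ ((n:ℤ) ≤ 0) := by exact_mod_cast by omega
    simp only [hξdef, h1, h2, if_false]
    simpa using h0
  have hpo : IsPseudoOrbit (Homeomorph.refl X) δ ξ := by
    intro m
    show dist (ξ m) (ξ (m+1)) ≤ δ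
    rcases lt_trichotomy m (-1) with hm | hm | hm
    · have e1 : ξ m = p := by simp only [hξdef]; rw [if_pos (by omega)]
      have e2 : ξ (m+1) = p := by simp only [hξdef]; rw [if_pos (by omega)]
      rw [e1, e2]; simpa using le_of_lt hδ
    · subst hm
      have e1 : ξ (-1) = p := by simp only [hξdef]; rw [if_pos (by omega)]
      have e2 : (-1 : ℤ) + 1 = 0 := by omega
      rw [e1, e2, hξ0]; simpa using le_of_lt hδ
    · -- m ≥ 0
      have hm0 : 0 ≤ m := by omega
      rcases le_or_gt (n : ℤ) m with hnm | hnm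
      · have e1 : ξ m = q := by
          simp only [hξdef]; rw [if_neg (by omega), if_pos hnm]
        have e2 : ξ (m+1) = q := by
          simp only [hξdef]; rw [if_neg (by omega), if_pos (by omega)]
        rw [e1, e2]; simpa using le_of_lt hδ
      · -- 0 ≤ m < n
        have hmt : m.toNat < n := by omega
        have e1 : ξ m = c m.toNat := by
          simp only [hξdef]; rw [if_neg (by omega), if_neg (by omega)]
        have key : ξ (m+1) = c (m.toNat + 1) := by
          rcases eq_or_lt_of_le (by omega : m + 1 ≤ (n:ℤ)) with he | hlt
          · have e2 : ξ (m+1) = q := by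
              simp only [hξdef]; rw [if_neg (by omega), if_pos (by omega)]
            have : m.toNat + 1 = n := by omega
            rw [e2, this, hn]
          · have e2 : ξ (m+1) = c (m+1).toNat := by
              simp only [hξdef]; rw [if_neg (by omega), if_neg (by omega)]
            have : (m+1).toNat = m.toNat + 1 := by omega
            rw [e2, this]
        rw [e1, key]
        exact hs m.toNat hmt
  obtain ⟨y, hy⟩ := hsh ξ hpo hξ0
  have h1 : dist y p ≤ dist q p / 3 := by
    have := hy 0
    rwa [hpow_refl, hξ0] at this
  have h2 : dist y q ≤ dist q p / 3 := by
    have := hy (n : ℤ)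
    have eq : ξ (n:ℤ) = q := by
      simp only [hξdef]; rw [if_neg (by omega), if_pos (le_refl _)]
    rwa [hpow_refl, eq] at this
  have : dist q p ≤ dist q y + dist y p := dist_triangle q y p
  rw [dist_comm q y] at this
  linarith
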